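/- arXiv:2405.14060 — 3 statements merged into one kernel-verified Lean document; each statement's English description precedes it below -/
import Mathlib

section
/- Backward rule for pairwise tensor contraction: if C = con(Λ, {A_{Va}, B_{Vb}}, Vc) with Λ = Va ∪ Vb ∪ Vc, and L is a scalar function of C with adjoint C̄ = ∂L/∂C, then the adjoints of the inputs are Ā = con(Λ, {C̄, B}, Va) and B̄ = con(Λ, {A, C̄}, Vb). -/
/-!
STATEMENT 4: Backward rule for a pairwise tensor contraction
C = con(Λ, {A_{Va}, B_{Vb}}, Vc), Λ = Va ∪ Vb ∪ Vc:
the adjoints are  Ā = con(Λ, {C̄, B}, Va)  and  B̄ = con(Λ, {A, C̄}, Vb),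
formalized via the chain rule: the derivative of L = Σ_c C̄(c)·C(c) with respect to an
entry A(a) equals con(Λ, {C̄, B}, Va)(a), and likewise for B.
-/

variable {ι : Type} [Fintype ι] [DecidableEq ι]
variable {D : ι → Type} [∀ i, Fintype (D i)] [∀ i, DecidableEq (D i)]

/-- Tensor network contraction `con(Λ, 𝒯, V₀)`. -/
noncomputable def con (𝒯 : List ((∀ i, D i) → ℝ)) (V₀ : Finset ι) (x : ∀ i, D i) : ℝ :=
  ∑ y : ∀ i, D i, if ∀ i ∈ V₀, y i = x i then (𝒯.map fun T => T y).prod else 0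

/-- A tensor with scope `S`, given by a table of entries, as a function of full
assignments. -/
def tensorOf (S : Finset ι) (t : (∀ j : {i // i ∈ S}, D j.1) → ℝ) : (∀ i, D i) → ℝ :=
  fun y => t fun j => y j.1

/-- Backward rule for pairwise tensor contraction.  Note that
`con [tensorOf Vc C̄, tensorOf Va A, tensorOf Vb B] ∅ = Σ_c C̄(c)·C(c)` where
`C = con(Λ, {A, B}, Vc)`; differentiating in the entry `A(a)` (resp. `B(b)`) gives the
adjoint `Ā(a) = con(Λ, {C̄, B}, Va)(a)` (resp. `B̄(b) = con(Λ, {A, C̄}, Vb)(b)`). -/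
theorem backward_rule_pairwise_contraction (Va Vb Vc : Finset ι)
    (hΛ : Va ∪ Vb ∪ Vc = (Finset.univ : Finset ι))
    (A : (∀ j : {i // i ∈ Va}, D j.1) → ℝ) (B : (∀ j : {i // i ∈ Vb}, D j.1) → ℝ)
    (Cbar : (∀ j : {i // i ∈ Vc}, D j.1) → ℝ) (x : ∀ i, D i) :
    HasDerivAt
      (fun s : ℝ =>
        con [tensorOf Vc Cbar, tensorOf Va (Function.update A (fun j => x j.1) s),
          tensorOf Vb B] (∅ : Finset ι) x)
      (con [tensorOf Vc Cbar, tensorOf Vb B] Va x) (A fun j => x j.1) ∧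
    HasDerivAt
      (fun s : ℝ =>
        con [tensorOf Vc Cbar, tensorOf Va A,
          tensorOf Vb (Function.update B (fun j => x j.1) s)] (∅ : Finset ι) x)
      (con [tensorOf Va A, tensorOf Vc Cbar] Vb x) (B fun j => x j.1) := by
  unfold con
  have key : ∀ (S : Finset ι) (y : ∀ i, D i),
      ((fun j : {i // i ∈ S} => y j.1) = fun j : {i // i ∈ S} => x j.1) ↔ ∀ i ∈ S, y i = x i := by
    intro S y
    rw [funext_iff, Subtype.forall]
  constructor
  · have h1 : ∀ y : ∀ i, D i, HasDerivAt
        (fun s : ℝ => if ∀ i ∈ (∅ : Finset ι), y i = x i then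
          (([tensorOf Vc Cbar, tensorOf Va (Function.update A (fun j => x j.1) s),
            tensorOf Vb B]).map fun T => T y).prod else 0)
        (if ∀ i ∈ Va, y i = x i then
          (([tensorOf Vc Cbar, tensorOf Vb B]).map fun T => T y).prod else 0)
        (A fun j => x j.1) := by
      intro y
      simp only [List.map_cons, List.map_nil, List.prod_cons, List.prod_nil, mul_one,
        Finset.notMem_empty, false_implies, implies_true, if_true]
      unfold tensorOf
      by_cases h : (fun j : {i // i ∈ Va} => y j.1) = (fun j : {i // i ∈ Va} => x j.1)
      · rw [if_pos ((key Va y).mp h)]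
        simp only [Function.update_apply, if_pos h]
        convert ((hasDerivAt_id (A fun j => x j.1)).mul_const (B fun j => y j.1)).const_mul
          (Cbar fun j => y j.1) using 1
        · rfl
        · rfl
        · funext s
          simp only [id]
        · ring
      · rw [if_neg (fun hc => h ((key Va y).mpr hc))]
        simp only [Function.update_apply, if_neg h]
        exact hasDerivAt_const _ _
    exact HasDerivAt.fun_sum (fun y _ => h1 y)
  · have h1 : ∀ y : ∀ i, D i, HasDerivAt
        (fun s : ℝ => if ∀ i ∈ (∅ : Finset ι), y i = x i then
          (([tensorOf Vc Cbar, tensorOf Va A,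
            tensorOf Vb (Function.update B (fun j => x j.1) s)]).map fun T => T y).prod else 0)
        (if ∀ i ∈ Vb, y i = x i then
          (([tensorOf Va A, tensorOf Vc Cbar]).map fun T => T y).prod else 0)
        (B fun j => x j.1) := by
      intro y
      simp only [List.map_cons, List.map_nil, List.prod_cons, List.prod_nil, mul_one,
        Finset.notMem_empty, false_implies, implies_true, if_true]
      unfold tensorOf
      by_cases h : (fun j : {i // i ∈ Vb} => y j.1) = (fun j : {i // i ∈ Vb} => x j.1)
      · rw [if_pos ((key Vb y).mp h)]
        simp only [Function.update_apply, if_pos h]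
        convert ((hasDerivAt_id (B fun j => x j.1)).const_mul (A fun j => y j.1)).const_mul
          (Cbar fun j => y j.1) using 1
        · rfl
        · rfl
        · funext s
          simp only [id]
        · ring
      · rw [if_neg (fun hc => h ((key Vb y).mpr hc))]
        simp only [Function.update_apply, if_neg h]
        exact hasDerivAt_const _ _
    exact HasDerivAt.fun_sum (fun y _ => h1 y)
end

section
/- In a tensor network with scalar output where L = con(Λ, 𝒯 ∪ {𝟙_Q}, ∅) and 𝟙_Q is a unity tensor over Q ⊆ Λ, the gradient of L with respect to 𝟙_Q equals the contraction con(Λ, 𝒯, Q), i.e., the output tensor over labels Q of the original network. In the probabilistic setting where the product of tensors in 𝒯 is a joint distribution p(Λ), this gradient equals the (unnormalized) marginal p(Q). -/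
/-!
STATEMENT 5: For L = con(Λ, 𝒯 ∪ {𝟙_Q}, ∅) with 𝟙_Q a unity tensor over Q ⊆ Λ, the
gradient of L with respect to an entry 𝟙_Q(q) equals con(Λ, 𝒯, Q)(q), which is the
(unnormalized) marginal: the sum over assignments of Λ∖Q, with Q fixed to q, of the
product of the tensors in 𝒯.
-/

variable {ι : Type} [Fintype ι] [DecidableEq ι]
variable {D : ι → Type} [∀ i, Fintype (D i)] [∀ i, DecidableEq (D i)]

/-- The gradient of the scalar contraction `L = con(Λ, 𝒯 ∪ {𝟙_Q}, ∅)` with respect to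
the entry of the unity tensor `𝟙_Q` at `q` (the restriction of `x` to `Q`) equals
`con(Λ, 𝒯, Q)(q)`, which in turn is the unnormalized marginal
`Σ_{assignments of Λ∖Q, Q fixed to q} Π_{T ∈ 𝒯} T`. -/
theorem gradient_unity_tensor_eq_marginal (Q : Finset ι)
    (𝒯 : List ((∀ i, D i) → ℝ)) (hnn : ∀ T ∈ 𝒯, ∀ y, 0 ≤ T y) (x : ∀ i, D i) :
    HasDerivAt
      (fun s : ℝ =>
        con (tensorOf Q (Function.update (fun _ => (1 : ℝ)) (fun j => x j.1) s) :: 𝒯)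
          (∅ : Finset ι) x)
      (con 𝒯 Q x) 1 ∧
    con 𝒯 Q x =
      ∑ y : ∀ i, D i, if ∀ i ∈ Q, y i = x i then (𝒯.map fun T => T y).prod else 0 := by
  refine ⟨?_, rfl⟩
  have hc : ∀ y : ∀ i, D i, ((fun j : {i // i ∈ Q} => y j.1) = fun j : {i // i ∈ Q} => x j.1) ↔
      (∀ i ∈ Q, y i = x i) := by
    intro y
    constructor
    · intro h i hi; exact congrFun h ⟨i, hi⟩
    · intro h; funext j; exact h j.1 j.2
  have hf : (fun s : ℝ =>
        con (tensorOf Q (Function.update (fun _ => (1 : ℝ)) (fun j => x j.1) s) :: 𝒯)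
          (∅ : Finset ι) x) =
      fun s : ℝ => (con 𝒯 Q x) * s +
        ∑ y : ∀ i, D i, if ∀ i ∈ Q, y i = x i then 0 else (𝒯.map fun T => T y).prod := by
    funext s
    simp only [con, List.map_cons, List.prod_cons, tensorOf, Finset.notMem_empty,
      false_implies, implies_true, if_true, Finset.mul_sum, Finset.sum_add_distrib.symm]
    rw [Finset.sum_mul, ← Finset.sum_add_distrib]
    apply Finset.sum_congr rfl
    intro y _
    rw [Function.update_apply]
    by_cases h : ∀ i ∈ Q, y i = x i
    · rw [if_pos ((hc y).mpr h), if_pos h, if_pos h]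
      ring
    · rw [if_neg (fun hh => h ((hc y).mp hh)), if_neg h, if_neg h]
      ring
  rw [hf]
  simpa using ((hasDerivAt_id (1:ℝ)).const_mul (con 𝒯 Q x)).add_const
    (∑ y : ∀ i, D i, if ∀ i ∈ Q, y i = x i then 0 else (𝒯.map fun T => T y).prod)
end

section
/- Correctness of the backward sampling rule: let p(X,Y) be a probability distribution obtained as the normalized contraction of tensors A over X, B over Y, and R over Z ⊆ X ∪ Y (where all tensors are nonnegative), with C_Z = con(X∪Y, {A,B}, Z). Then for any assignment s_Z of Z with p(s_Z) > 0, the conditional distribution of the eliminated variables M = (X∪Y)∖Z given Z = s_Z satisfies p(M = m | Z = s_Z) = con(M, {A,B} sliced at Z = s_Z, M)(m) / C(s_Z). -/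
/-!
STATEMENT 10: Correctness of the backward sampling rule.  With the joint distribution
p(X,Y) ∝ A·B·R (tensors A over X, B over Y, R over Z ⊆ X ∪ Y) and
C_Z = con(X∪Y, {A,B}, Z), for any assignment s_Z of Z with p(s_Z) > 0 the conditional
of the eliminated variables M = (X∪Y)∖Z satisfies
  p(M = m | Z = s_Z) = con(M, {A,B}_{Z=s_Z}, M)(m) / C(s_Z).
Here a full assignment `x` encodes both `m` (its M-coordinates) and `s_Z`
(its Z-coordinates); `con(M, {A,B}_{Z=s_Z}, M)(m)` is then the product `A x * B x`.
-/

variable {ι : Type} [Fintype ι] [DecidableEq ι]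
variable {D : ι → Type} [∀ i, Fintype (D i)] [∀ i, DecidableEq (D i)]

/-- A tensor `T` has scope (at most) `S` if it depends only on the coordinates in `S`. -/
def TensorDependsOn (T : (∀ i, D i) → ℝ) (S : Finset ι) : Prop :=
  ∀ x y : ∀ i, D i, (∀ i ∈ S, x i = y i) → T x = T y

/-- Correctness of the backward sampling rule:
`p(M = m | Z = s_Z) = con(M, {A,B}_{Z=s_Z}, M)(m) / C(s_Z)`. -/
theorem backward_sampling_rule (X Y Z : Finset ι)
    (hXY : X ∪ Y = (Finset.univ : Finset ι)) (hZ : Z ⊆ X ∪ Y)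
    (A B R : (∀ i, D i) → ℝ)
    (hA : TensorDependsOn A X) (hB : TensorDependsOn B Y) (hR : TensorDependsOn R Z)
    (hAnn : ∀ y, 0 ≤ A y) (hBnn : ∀ y, 0 ≤ B y) (hRnn : ∀ y, 0 ≤ R y)
    (W : ℝ) (hW : W = ∑ y : ∀ i, D i, A y * B y * R y) (hWpos : 0 < W)
    (x : ∀ i, D i)
    -- p(s_Z) > 0, where p(Z) is the marginal of p on Z and s_Z = x restricted to Z
    (hsZ : 0 < con [A, B, R] Z x / W) :
    -- p(m | s_Z) = p(m, s_Z) / p(s_Z) = (A x * B x) / C(s_Z)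
    (A x * B x * R x / W) / (con [A, B, R] Z x / W) =
      (A x * B x) / con [A, B] Z x := by
  have key : con [A, B, R] Z x = R x * con [A, B] Z x := by
    unfold con
    rw [Finset.mul_sum]
    refine Finset.sum_congr rfl fun y _ => ?_
    by_cases h : ∀ i ∈ Z, y i = x i
    · simp only [if_pos h, List.map_cons, List.map_nil, List.prod_cons, List.prod_nil]
      rw [hR y x h]
      ring
    · simp [h]
  have hCnn : 0 ≤ con [A, B] Z x := by
    unfold con
    refine Finset.sum_nonneg fun y _ => ?_
    split
    · simp only [List.map_cons, List.map_nil, List.prod_cons, List.prod_nil, mul_one]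
      exact mul_nonneg (hAnn y) (hBnn y)
    · exact le_refl 0
  have hpos : 0 < R x * con [A, B] Z x := by
    have := (div_pos_iff.mp hsZ)
    rcases this with ⟨h1, _⟩ | ⟨_, h2⟩
    · rwa [key] at h1
    · linarith
  have hR0 : R x ≠ 0 := by
    intro h; rw [h, zero_mul] at hpos; exact lt_irrefl 0 hpos
  have hC0 : con [A, B] Z x ≠ 0 := by
    intro h; rw [h, mul_zero] at hpos; exact lt_irrefl 0 hpos
  rw [key]
  field_simp
end
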